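/- For a bounded set S ⊆ ℝ² with circumradius R (the infimum over centers c of sup_{x∈S} dist(x,c)) and diameter D, one has √3·R ≤ D ≤ 2R. -/
import Mathlib

open Metric
open scoped RealInnerProductSpace

section vec
variable {E : Type*} [NormedAddCommGroup E] [InnerProductSpace ℝ E]

/-- Obtuse (or right) case: the midpoint of `u v` is within `‖u-v‖/2` of `0`, `u`, `v`. -/
lemma jung_obtuse_center (u v : E) (h : ⟪u, v⟫ ≤ 0) :
    ∃ w : E, ‖w‖ ^ 2 ≤ ‖u - v‖ ^ 2 / 4 ∧ ‖w - u‖ ^ 2 ≤ ‖u - v‖ ^ 2 / 4 ∧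
      ‖w - v‖ ^ 2 ≤ ‖u - v‖ ^ 2 / 4 := by
  have h2 : ‖u - v‖ ^ 2 = ‖u‖^2 - 2*⟪u,v⟫ + ‖v‖^2 := norm_sub_sq_real u v
  have hn : ‖((2:ℝ)⁻¹ : ℝ)‖ = (2:ℝ)⁻¹ := by norm_num
  refine ⟨(2:ℝ)⁻¹ • (u + v), ?_, ?_, ?_⟩
  · have h1 : ‖(2:ℝ)⁻¹ • (u + v)‖ ^ 2 = (‖u‖^2 + 2*⟪u,v⟫ + ‖v‖^2)/4 := by
      rw [norm_smul, hn, mul_pow, norm_add_sq_real u v]; ring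
    nlinarith [h1, h2]
  · have he : (2:ℝ)⁻¹ • (u + v) - u = (2:ℝ)⁻¹ • (v - u) := by module
    rw [he, norm_smul, hn, ← norm_neg (v - u), neg_sub, mul_pow]
    nlinarith [sq_nonneg ‖u - v‖]
  · have he : (2:ℝ)⁻¹ • (u + v) - v = (2:ℝ)⁻¹ • (u - v) := by module
    rw [he, norm_smul, hn, mul_pow]
    nlinarith [sq_nonneg ‖u - v‖]

/-- Acute case with the side `u v` longest: the circumcenter works. -/
lemma jung_acute_center (u v : E) (h1 : 0 < ⟪u, v⟫) (h2 : 2 * ⟪u, v⟫ ≤ ‖u‖ ^ 2)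
    (h3 : 2 * ⟪u, v⟫ ≤ ‖v‖ ^ 2) :
    ∃ w : E, ‖w‖ ^ 2 ≤ ‖u - v‖ ^ 2 / 3 ∧ ‖w - u‖ ^ 2 ≤ ‖u - v‖ ^ 2 / 3 ∧
      ‖w - v‖ ^ 2 ≤ ‖u - v‖ ^ 2 / 3 := by
  set a := ‖u‖ ^ 2 with ha
  set b := ‖v‖ ^ 2 with hbdef
  set c := ⟪u, v⟫ with hc
  have hab : 4 * c ^ 2 ≤ a * b := by nlinarith
  have hs : (0:ℝ) < 2 * (a * b - c ^ 2) := by nlinarith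
  set s : ℝ := 2 * (a * b - c ^ 2) with hsdef
  refine ⟨(b * (a - c) / s) • u + (a * (b - c) / s) • v, ?_⟩
  set w := (b * (a - c) / s) • u + (a * (b - c) / s) • v with hw
  have huu : ⟪u, u⟫ = a := real_inner_self_eq_norm_sq u
  have hvv : ⟪v, v⟫ = b := real_inner_self_eq_norm_sq v
  have hvu : ⟪v, u⟫ = c := by rw [real_inner_comm]
  have hwu : ⟪w, u⟫ = a / 2 := by
    rw [hw, inner_add_left, real_inner_smul_left, real_inner_smul_left, huu, hvu]
    field_simp
    ring
  have hwv : ⟪w, v⟫ = b / 2 := by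
    rw [hw, inner_add_left, real_inner_smul_left, real_inner_smul_left,
      ← hc, hvv]
    field_simp
    ring
  have hww : ‖w‖ ^ 2 = a * b * (a + b - 2 * c) / (2 * s) := by
    rw [← real_inner_self_eq_norm_sq w]
    nth_rewrite 2 [hw]
    rw [inner_add_right, real_inner_smul_right, real_inner_smul_right, hwu, hwv]
    field_simp
    ring
  have hd : ‖u - v‖ ^ 2 = a + b - 2 * c := by rw [norm_sub_sq_real]; ring
  have hwbound : ‖w‖ ^ 2 ≤ ‖u - v‖ ^ 2 / 3 := by
    rw [hww, hd]
    rw [div_le_div_iff₀ (by positivity) (by norm_num)]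
    have hd0 : 0 < a + b - 2 * c := by nlinarith
    nlinarith
  refine ⟨hwbound, ?_, ?_⟩
  · have : ‖w - u‖ ^ 2 = ‖w‖ ^ 2 := by
      rw [norm_sub_sq_real, hwu, ← ha]; ring
    rw [this]; exact hwbound
  · have : ‖w - v‖ ^ 2 = ‖w‖ ^ 2 := by
      rw [norm_sub_sq_real, hwv, ← hbdef]; ring
    rw [this]; exact hwbound

end vec

section vec2
set_option linter.unusedSectionVars false
variable {E : Type*} [NormedAddCommGroup E] [InnerProductSpace ℝ E]

lemma jung_transfer_u (u v : E) (B : ℝ)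
    (h : ∃ w : E, ‖w‖ ^ 2 ≤ B ∧ ‖w - (-u)‖ ^ 2 ≤ B ∧ ‖w - (v - u)‖ ^ 2 ≤ B) :
    ∃ w : E, ‖w‖ ^ 2 ≤ B ∧ ‖w - u‖ ^ 2 ≤ B ∧ ‖w - v‖ ^ 2 ≤ B := by
  obtain ⟨w, h0, h1, h2⟩ := h
  refine ⟨w + u, ?_, ?_, ?_⟩
  · have he : w + u = w - (-u) := by abel
    rw [he]; exact h1
  · have he : w + u - u = w := by abel
    rw [he]; exact h0
  · have he : w + u - v = w - (v - u) := by abel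
    rw [he]; exact h2

lemma jung_transfer_v (u v : E) (B : ℝ)
    (h : ∃ w : E, ‖w‖ ^ 2 ≤ B ∧ ‖w - (u - v)‖ ^ 2 ≤ B ∧ ‖w - (-v)‖ ^ 2 ≤ B) :
    ∃ w : E, ‖w‖ ^ 2 ≤ B ∧ ‖w - u‖ ^ 2 ≤ B ∧ ‖w - v‖ ^ 2 ≤ B := by
  obtain ⟨w, h0, h1, h2⟩ := h
  refine ⟨w + v, ?_, ?_, ?_⟩
  · have he : w + v = w - (-v) := by abel
    rw [he]; exact h2
  · have he : w + v - u = w - (u - v) := by abel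
    rw [he]; exact h1
  · have he : w + v - v = w := by abel
    rw [he]; exact h0

lemma jung_mono_bound (u v : E) (B B' : ℝ) (hB : B ≤ B')
    (h : ∃ w : E, ‖w‖ ^ 2 ≤ B ∧ ‖w - u‖ ^ 2 ≤ B ∧ ‖w - v‖ ^ 2 ≤ B) :
    ∃ w : E, ‖w‖ ^ 2 ≤ B' ∧ ‖w - u‖ ^ 2 ≤ B' ∧ ‖w - v‖ ^ 2 ≤ B' := by
  obtain ⟨w, h0, h1, h2⟩ := h
  exact ⟨w, h0.trans hB, h1.trans hB, h2.trans hB⟩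

/-- Any configuration `0, u, v` with pairwise (squared) distances ≤ D² fits in a ball of
radius `D/√3` centered at some `w` (squared form). -/
lemma jung_vec_center (u v : E) (D : ℝ) (hu : ‖u‖ ^ 2 ≤ D ^ 2) (hv : ‖v‖ ^ 2 ≤ D ^ 2)
    (huv : ‖u - v‖ ^ 2 ≤ D ^ 2) :
    ∃ w : E, ‖w‖ ^ 2 ≤ D ^ 2 / 3 ∧ ‖w - u‖ ^ 2 ≤ D ^ 2 / 3 ∧ ‖w - v‖ ^ 2 ≤ D ^ 2 / 3 := by
  have hD2 : (0:ℝ) ≤ D ^ 2 := le_trans (sq_nonneg _) hu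
  have hvu : ‖v - u‖ ^ 2 = ‖u - v‖ ^ 2 := by rw [← norm_neg (v - u), neg_sub]
  have hsub : ‖u - v‖ ^ 2 = ‖u‖ ^ 2 - 2 * ⟪u, v⟫ + ‖v‖ ^ 2 := norm_sub_sq_real u v
  have hAu : ⟪-u, v - u⟫ = ‖u‖ ^ 2 - ⟪u, v⟫ := by
    rw [inner_sub_right, inner_neg_left, inner_neg_left, real_inner_self_eq_norm_sq]; ring
  have hAv : ⟪u - v, -v⟫ = ‖v‖ ^ 2 - ⟪u, v⟫ := by
    rw [inner_sub_left, inner_neg_right, inner_neg_right, real_inner_self_eq_norm_sq,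
      real_inner_comm v u]; ring
  have heu : (-u) - (v - u) = -v := by abel
  have hev : (u - v) - (-v) = u := by abel
  rcases le_or_gt ⟪u, v⟫ 0 with h0 | h0
  · exact jung_mono_bound u v _ _ (by linarith) (jung_obtuse_center u v h0)
  rcases le_or_gt (‖u‖ ^ 2) ⟪u, v⟫ with h1 | h1
  · -- angle at u non-acute
    refine jung_mono_bound u v (‖v‖ ^ 2 / 4) _ (by linarith)
      (jung_transfer_u u v _ ?_)
    have := jung_obtuse_center (-u) (v - u) (by rw [hAu]; linarith)
    rwa [heu, norm_neg] at this
  rcases le_or_gt (‖v‖ ^ 2) ⟪u, v⟫ with h2 | h2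
  · -- angle at v non-acute
    refine jung_mono_bound u v (‖u‖ ^ 2 / 4) _ (by linarith)
      (jung_transfer_v u v _ ?_)
    have := jung_obtuse_center (u - v) (-v) (by rw [hAv]; linarith)
    rwa [hev] at this
  -- all angles acute
  rcases le_or_gt (2 * ⟪u, v⟫) (‖u‖ ^ 2) with hca | hca
  · rcases le_or_gt (2 * ⟪u, v⟫) (‖v‖ ^ 2) with hcb | hcb
    · exact jung_mono_bound u v _ _ (by linarith) (jung_acute_center u v h0 hca hcb)
    · -- side ‖u‖ longest, vertex v
      refine jung_mono_bound u v (‖u‖ ^ 2 / 3) _ (by linarith) (jung_transfer_v u v _ ?_)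
      have := jung_acute_center (u - v) (-v) (by rw [hAv]; linarith)
        (by rw [hAv, hsub]; linarith) (by rw [hAv, norm_neg]; linarith)
      rwa [hev] at this
  · rcases le_total (‖u‖ ^ 2) (‖v‖ ^ 2) with hab | hab
    · -- side ‖v‖ longest, vertex u
      refine jung_mono_bound u v (‖v‖ ^ 2 / 3) _ (by linarith) (jung_transfer_u u v _ ?_)
      have := jung_acute_center (-u) (v - u) (by rw [hAu]; linarith)
        (by rw [hAu, norm_neg]; linarith) (by rw [hAu, hvu, hsub]; linarith)
      rwa [heu, norm_neg] at this
    · -- side ‖u‖ longest, vertex v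
      refine jung_mono_bound u v (‖u‖ ^ 2 / 3) _ (by linarith) (jung_transfer_v u v _ ?_)
      have := jung_acute_center (u - v) (-v) (by rw [hAv]; linarith)
        (by rw [hAv, hsub]; linarith) (by rw [hAv, norm_neg]; linarith)
      rwa [hev] at this

lemma jung_sq_aux {x D : ℝ} (hx : 0 ≤ x) (hD : 0 ≤ D) (h : x ^ 2 ≤ D ^ 2 / 3) :
    x ≤ D / Real.sqrt 3 := by
  have h3 : (0:ℝ) < Real.sqrt 3 := Real.sqrt_pos.mpr (by norm_num)
  have hsq : (D / Real.sqrt 3) ^ 2 = D ^ 2 / 3 := by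
    rw [div_pow, Real.sq_sqrt (by norm_num : (0:ℝ) ≤ 3)]
  nlinarith [div_nonneg hD h3.le]

/-- Three points with pairwise distances at most `D` fit in a closed ball of radius `D/√3`. -/
lemma jung_three_points (x y z : E) (D : ℝ) (hD : 0 ≤ D)
    (hxy : dist x y ≤ D) (hxz : dist x z ≤ D) (hyz : dist y z ≤ D) :
    ∃ p : E, dist x p ≤ D / Real.sqrt 3 ∧ dist y p ≤ D / Real.sqrt 3 ∧
      dist z p ≤ D / Real.sqrt 3 := by
  have hu : ‖y - x‖ ^ 2 ≤ D ^ 2 := by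
    rw [← dist_eq_norm, dist_comm]
    exact pow_le_pow_left₀ dist_nonneg hxy 2
  have hv : ‖z - x‖ ^ 2 ≤ D ^ 2 := by
    rw [← dist_eq_norm, dist_comm]
    exact pow_le_pow_left₀ dist_nonneg hxz 2
  have huv : ‖(y - x) - (z - x)‖ ^ 2 ≤ D ^ 2 := by
    have he : (y - x) - (z - x) = y - z := by abel
    rw [he, ← dist_eq_norm]
    exact pow_le_pow_left₀ dist_nonneg hyz 2
  obtain ⟨w, h0, h1, h2⟩ := jung_vec_center (y - x) (z - x) D hu hv huv
  refine ⟨x + w, ?_, ?_, ?_⟩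
  · have : dist x (x + w) = ‖w‖ := by
      rw [dist_eq_norm]
      have he : x - (x + w) = -w := by abel
      rw [he, norm_neg]
    rw [this]
    exact jung_sq_aux (norm_nonneg _) hD h0
  · have : dist y (x + w) = ‖w - (y - x)‖ := by
      rw [dist_eq_norm]
      have he : y - (x + w) = -(w - (y - x)) := by abel
      rw [he, norm_neg]
    rw [this]
    exact jung_sq_aux (norm_nonneg _) hD h1
  · have : dist z (x + w) = ‖w - (z - x)‖ := by
      rw [dist_eq_norm]
      have he : z - (x + w) = -(w - (z - x)) := by abel
      rw [he, norm_neg]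
    rw [this]
    exact jung_sq_aux (norm_nonneg _) hD h2
end vec2

lemma jung_cover3 {α : Type*} (d : α) (I : Finset α) (h : I.card ≤ 3) :
    ∃ x y z : α, ∀ i ∈ I, i = x ∨ i = y ∨ i = z := by
  classical
  rcases hI : I.card with _ | _ | _ | _ | n
  · refine ⟨d, d, d, fun i hi => ?_⟩
    rw [Finset.card_eq_zero.mp hI] at hi
    simp at hi
  · obtain ⟨x, rfl⟩ := Finset.card_eq_one.mp hI
    refine ⟨x, x, x, fun i hi => ?_⟩
    simp at hi
    tauto
  · obtain ⟨x, y, _, rfl⟩ := Finset.card_eq_two.mp hI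
    refine ⟨x, y, y, fun i hi => ?_⟩
    simp at hi
    tauto
  · obtain ⟨x, y, z, _, _, _, rfl⟩ := Finset.card_eq_three.mp hI
    refine ⟨x, y, z, fun i hi => ?_⟩
    simp at hi
    tauto
  · omega

theorem jung_inequalities (S : Set (EuclideanSpace ℝ (Fin 2)))
    (hb : Bornology.IsBounded S)
    (hne : ∃ a ∈ S, ∃ b ∈ S, a ≠ b) :
    let R : ℝ := sInf {t : ℝ | ∃ c : EuclideanSpace ℝ (Fin 2), S ⊆ closedBall c t}
    Real.sqrt 3 * R ≤ Metric.diam S ∧ Metric.diam S ≤ 2 * R := by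
  intro R
  classical
  obtain ⟨a₀, ha₀, b₀, hb₀, -⟩ := hne
  set T : Set ℝ := {t : ℝ | ∃ c : EuclideanSpace ℝ (Fin 2), S ⊆ closedBall c t} with hT
  set D : ℝ := Metric.diam S with hD
  have hD0 : 0 ≤ D := Metric.diam_nonneg
  have hTne : T.Nonempty := by
    obtain ⟨r, hr⟩ := hb.subset_closedBall 0
    exact ⟨r, 0, hr⟩
  have hTbdd : BddBelow T := by
    refine ⟨0, fun t ⟨c, hc⟩ => ?_⟩
    have := hc ha₀
    rw [mem_closedBall] at this
    exact le_trans dist_nonneg this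
  have h3 : (0:ℝ) < Real.sqrt 3 := Real.sqrt_pos.mpr (by norm_num)
  constructor
  · -- √3 R ≤ D  (Jung)
    -- find a center via Helly
    have hmem : D / Real.sqrt 3 ∈ T := by
      set r : ℝ := D / Real.sqrt 3 with hr
      have hinter : (⋂ i : S, closedBall (i : EuclideanSpace ℝ (Fin 2)) r).Nonempty := by
        apply Convex.helly_theorem_compact' (𝕜 := ℝ)
          (fun i => convex_closedBall _ _) (fun i => isCompact_closedBall _ _)
        intro I hIcard
        rw [finrank_euclideanSpace_fin] at hIcard
        obtain ⟨x, y, z, hxyz⟩ := jung_cover3 (⟨a₀, ha₀⟩ : S) I hIcard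
        obtain ⟨p, hpx, hpy, hpz⟩ := jung_three_points (x : EuclideanSpace ℝ (Fin 2)) y z D hD0
          (Metric.dist_le_diam_of_mem hb x.2 y.2)
          (Metric.dist_le_diam_of_mem hb x.2 z.2)
          (Metric.dist_le_diam_of_mem hb y.2 z.2)
        refine ⟨p, ?_⟩
        rw [Set.mem_iInter₂]
        intro i hi
        rw [mem_closedBall, dist_comm]
        rcases hxyz i hi with rfl | rfl | rfl
        · exact hpx
        · exact hpy
        · exact hpz
      obtain ⟨p, hp⟩ := hinter
      rw [Set.mem_iInter] at hp
      refine ⟨p, fun x hx => ?_⟩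
      have := hp ⟨x, hx⟩
      rw [mem_closedBall] at this ⊢
      rwa [dist_comm]
    have hRle : R ≤ D / Real.sqrt 3 := csInf_le hTbdd hmem
    calc Real.sqrt 3 * R ≤ Real.sqrt 3 * (D / Real.sqrt 3) :=
          mul_le_mul_of_nonneg_left hRle h3.le
      _ = D := by field_simp
  · -- D ≤ 2 R
    have h2 : D / 2 ≤ R := by
      apply le_csInf hTne
      rintro t ⟨c, hc⟩
      have ht0 : 0 ≤ t := by
        have := hc ha₀
        rw [mem_closedBall] at this
        exact le_trans dist_nonneg this
      have : D ≤ 2 * t := by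
        calc D ≤ Metric.diam (closedBall c t) := Metric.diam_mono hc isBounded_closedBall
          _ ≤ 2 * t := Metric.diam_closedBall ht0
      linarith
    linarith
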